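/- Let p and q be lattice paths of length m given by {N,E}-words u_1...u_m and v_1...v_m that kiss: they agree as points after their first a steps through step b-1 (coming together at step a and traveling together), and separate at step b without crossing. Define p' with word u_1...u_{b-1} v_b...v_m and q' with word v_1...v_{b-1} u_b...u_m. Then T_p + T_q = T_{p'} + T_{q'}, and with weight w(T_p) = Σ_{1≤i<j≤m} δ_{ij}(p) ε^{j-i} (where δ_{ij}(p) = 0 if u_i = u_j and 1 otherwise) and ε = 1/C(m,2), we have w(T_p) + w(T_q) > w(T_{p'}) + w(T_{q'}). -/

import Mathlib

open Finset

/-- Pairs `{u<v}` and `{x<y}` (values in `ℕ ∪ {∞}`) are non-nesting if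
neither `x<u<v<y` nor `u<x<y<v`. -/
def PairNonNesting (u v x y : WithTop ℕ) : Prop :=
  ¬ (x < u ∧ u < v ∧ v < y) ∧ ¬ (u < x ∧ x < y ∧ y < v)

/-- Pairs `{u<v}` and `{x<y}` are non-crossing if neither `x<u<y<v` nor `u<x<v<y`. -/
def PairNonCrossing (u v x y : WithTop ℕ) : Prop :=
  ¬ (x < u ∧ u < y ∧ y < v) ∧ ¬ (u < x ∧ x < v ∧ v < y)

/-- Remove one common entry (equal entries in equal positions) from the two lists. -/
def stripOnce (I J : List ℕ) : Option (List ℕ × List ℕ) :=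
  ((List.range (min I.length J.length)).find? (fun s => I.getD s 0 == J.getD s 0)).map
    (fun s => (I.eraseIdx s, J.eraseIdx s))

def stripAux : ℕ → List ℕ → List ℕ → List ℕ × List ℕ
  | 0, I, J => (I, J)
  | n+1, I, J =>
    match stripOnce I J with
    | none => (I, J)
    | some (I', J') => stripAux n I' J'

/-- Repeatedly remove the "common part" (equal entries in equal positions). -/
def strip (I J : List ℕ) : List ℕ × List ℕ := stripAux I.length I J

/-- The `s`-th entry (0-indexed) of the list, viewed in `ℕ ∪ {∞}`, with `∞` beyond the end. -/
def entry (l : List ℕ) (s : ℕ) : WithTop ℕ :=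
  (l.map (fun a => (a : WithTop ℕ))).getD s ⊤

/-- Non-nesting condition on sorted lists `I`, `J` with `I` the shorter one:
after removing the common part, all consecutive-difference pairs are non-nesting
(with the `∞` convention for the shorter list). -/
def ListsNonNesting (I J : List ℕ) : Prop :=
  ∀ s : ℕ, s + 1 < (strip I J).2.length →
    PairNonNesting (entry (strip I J).1 s) (entry (strip I J).1 (s+1))
      (entry (strip I J).2 s) (entry (strip I J).2 (s+1))

def ListsNonCrossing (I J : List ℕ) : Prop :=
  ∀ s : ℕ, s + 1 < (strip I J).2.length →
    PairNonCrossing (entry (strip I J).1 s) (entry (strip I J).1 (s+1))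
      (entry (strip I J).2 s) (entry (strip I J).2 (s+1))

/-- The increasing list of elements of a finite set. -/
def sortedList (I : Finset ℕ) : List ℕ := I.sort (· ≤ ·)

/-- Subsets `I`, `J` are non-nesting. -/
def SetsNonNesting (I J : Finset ℕ) : Prop :=
  if I.card ≤ J.card then ListsNonNesting (sortedList I) (sortedList J)
  else ListsNonNesting (sortedList J) (sortedList I)

/-- Subsets `I`, `J` are non-crossing. -/
def SetsNonCrossing (I J : Finset ℕ) : Prop :=
  if I.card ≤ J.card then ListsNonCrossing (sortedList I) (sortedList J)
  else ListsNonCrossing (sortedList J) (sortedList I)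

/-- `A ≺ B`: every element of `A` is smaller than every element of `B`. -/
def Precedes (A B : Finset ℕ) : Prop := ∀ a ∈ A, ∀ b ∈ B, a < b

/-- Leclerc–Zelevinsky weak separation. -/
def WeaklySeparated (I J : Finset ℕ) : Prop :=
  (J.card ≤ I.card ∧ ∃ J₁ J₂ : Finset ℕ, Disjoint J₁ J₂ ∧ J \ I = J₁ ∪ J₂ ∧
    Precedes J₁ (I \ J) ∧ Precedes (I \ J) J₂) ∨
  (I.card ≤ J.card ∧ ∃ I₁ I₂ : Finset ℕ, Disjoint I₁ I₂ ∧ I \ J = I₁ ∪ I₂ ∧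
    Precedes I₁ (J \ I) ∧ Precedes (J \ I) I₂)

/-- Number of north steps of the path `p(I)` among its first `k` steps. -/
def northCount (I : Finset ℕ) (k : ℕ) : ℕ := (I.filter (fun i => i ≤ k)).card

/-- Paths `p(I)`, `p(J)` are non-crossing: one lies weakly northwest of the other
along their entire length. -/
def PathsNonCrossing (I J : Finset ℕ) : Prop :=
  (∀ k, northCount J k ≤ northCount I k) ∨ (∀ k, northCount I k ≤ northCount J k)

/-- `[k₁, k₂]` (in step coordinates) is a proper common part of the paths `p(I)`, `p(J)`
of length `m`: a maximal shared connected subpath containing neither the source nor an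
endpoint.  Maximality is expressed by the two paths separating just before `k₁` and just
after `k₂`. -/
def ProperCommonPart (m : ℕ) (I J : Finset ℕ) (k₁ k₂ : ℕ) : Prop :=
  1 ≤ k₁ ∧ k₁ ≤ k₂ ∧ k₂ < m ∧
  (∀ k, k₁ ≤ k → k ≤ k₂ → northCount I k = northCount J k) ∧
  northCount I (k₁ - 1) ≠ northCount J (k₁ - 1) ∧
  northCount I (k₂ + 1) ≠ northCount J (k₂ + 1)

/-- Paths `p(I)`, `p(J)` are non-kissing: at every proper common part each path leaves
in the same direction in which it entered (the common part is a crossing, not a kiss). -/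
def PathsNonKissing (m : ℕ) (I J : Finset ℕ) : Prop :=
  ∀ k₁ k₂, ProperCommonPart m I J k₁ k₂ → ((k₁ ∈ I) ↔ (k₂ + 1 ∈ I))

/-- Number of north steps among the first `k` steps, for `k ∈ ℤ` (zero for `k ≤ 0`). -/
def northCountZ (I : Finset ℕ) (k : ℤ) : ℤ := (northCount I k.toNat : ℤ)

/-- The indicator Gelfand–Tsetlin pattern of the path `p(I)`: the cell
`[x,x+1] × [y,y+1]` gets a `1` if it lies southeast of the path and `0` if northwest. -/
noncomputable def Tpat (I : Finset ℕ) (x y : ℤ) : ℝ :=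
  if y + 1 ≤ northCountZ I (x + y + 1) then 1 else 0

/-- `(x,y)` is a node of the partial staircase `L ⊆ L_m` with set of sink heights `A`:
it lies (weakly) southwest of some sink `(m-j, j)`, `j ∈ A`. -/
def NodeL (m : ℕ) (A : Finset ℕ) (x y : ℤ) : Prop :=
  0 ≤ x ∧ 0 ≤ y ∧ ∃ j ∈ A, x + j ≤ m ∧ y ≤ j

/-- Same, with natural-number coordinates. -/
def InL (m : ℕ) (A : Finset ℕ) (x y : ℕ) : Prop :=
  ∃ j ∈ A, x + j ≤ m ∧ y ≤ j

/-- The path `p(I)` is contained in the partial staircase with sink heights `A`. -/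
def PathInL (m : ℕ) (A : Finset ℕ) (I : Finset ℕ) : Prop :=
  ∀ k ≤ m, InL m A (k - northCount I k) (northCount I k)

/-- A critical node has edges of `L` leaving it toward both the north and the east. -/
def CriticalNode (m : ℕ) (A : Finset ℕ) (x y : ℕ) : Prop :=
  InL m A (x + 1) y ∧ InL m A x (y + 1)

open Classical in
/-- `N(L)`: the number of critical nodes of the partial staircase. -/
noncomputable def numCritical (m : ℕ) (A : Finset ℕ) : ℕ :=
  ((Finset.range (m+1) ×ˢ Finset.range (m+1)).filter
    (fun p => CriticalNode m A p.1 p.2)).card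

/-- The weight `w(T_p) = Σ_{1 ≤ i < j ≤ m} δ_{ij}(p) ε^{j-i}` with `ε = 1/C(m,2)`,
where `δ_{ij}(p) = 0` if letters `i` and `j` of the word of `p` agree and `1` otherwise. -/
noncomputable def wgt (m : ℕ) (I : Finset ℕ) : ℝ :=
  ∑ q ∈ (Finset.Icc 1 m ×ˢ Finset.Icc 1 m).filter (fun q => q.1 < q.2),
    (if (q.1 ∈ I ↔ q.2 ∈ I) then 0 else (1 / (m.choose 2 : ℝ)) ^ (q.2 - q.1))

section Aux

lemma nc_step (X : Finset ℕ) (k : ℕ) :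
    northCount X (k+1) = northCount X k + (if k+1 ∈ X then 1 else 0) := by
  unfold northCount
  rw [Finset.card_filter, Finset.card_filter]
  have h : ∀ i ∈ X, (if i ≤ k+1 then (1:ℕ) else 0)
      = (if i ≤ k then 1 else 0) + (if i = k+1 then 1 else 0) := by
    intro i _
    by_cases h3 : i = k+1
    · subst h3; simp
    · by_cases h2 : i ≤ k
      · rw [if_pos (by omega), if_pos h2, if_neg h3]
      · rw [if_neg (by omega), if_neg h2, if_neg h3]
  rw [Finset.sum_congr rfl h, Finset.sum_add_distrib,
    Finset.sum_ite_eq' X (k+1) (fun _ => (1:ℕ))]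

/-- membership in the tail-swapped set -/
lemma swap_mem {m b : ℕ} {I J : Finset ℕ} (hI : I ⊆ Finset.Icc 1 m)
    (hJ : J ⊆ Finset.Icc 1 m) (hb : 1 ≤ b) (i : ℕ) :
    i ∈ (I ∩ Finset.Icc 1 (b-1)) ∪ (J ∩ Finset.Icc b m) ↔
      (if i < b then i ∈ I else i ∈ J) := by
  simp only [Finset.mem_union, Finset.mem_inter, Finset.mem_Icc]
  split
  case isTrue h =>
    constructor
    · rintro (⟨hi, _⟩ | ⟨_, hb', _⟩)
      · exact hi
      · omega
    · intro hi
      exact Or.inl ⟨hi, (Finset.mem_Icc.mp (hI hi)).1, by omega⟩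
  case isFalse h =>
    constructor
    · rintro (⟨_, _, h2⟩ | ⟨hj, _⟩)
      · omega
      · exact hj
    · intro hj
      exact Or.inr ⟨hj, by omega, (Finset.mem_Icc.mp (hJ hj)).2⟩

lemma swap_nc_lt {m b : ℕ} {I J : Finset ℕ} (hI : I ⊆ Finset.Icc 1 m)
    (hJ : J ⊆ Finset.Icc 1 m) (hb : 1 ≤ b) {k : ℕ} (hk : k < b) :
    northCount ((I ∩ Finset.Icc 1 (b-1)) ∪ (J ∩ Finset.Icc b m)) k = northCount I k := by
  unfold northCount
  congr 1
  ext i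
  simp only [Finset.mem_filter]
  constructor
  · rintro ⟨hi, hik⟩
    rw [swap_mem hI hJ hb, if_pos (by omega)] at hi
    exact ⟨hi, hik⟩
  · rintro ⟨hi, hik⟩
    exact ⟨by rw [swap_mem hI hJ hb, if_pos (by omega)]; exact hi, hik⟩

lemma swap_nc_ge {m b : ℕ} {I J : Finset ℕ} (hI : I ⊆ Finset.Icc 1 m)
    (hJ : J ⊆ Finset.Icc 1 m) (hb : 1 ≤ b)
    (heq : northCount I (b-1) = northCount J (b-1)) :
    ∀ k, b - 1 ≤ k →
      northCount ((I ∩ Finset.Icc 1 (b-1)) ∪ (J ∩ Finset.Icc b m)) k = northCount J k := by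
  intro k hk
  induction k, hk using Nat.le_induction with
  | base => rw [swap_nc_lt hI hJ hb (by omega), heq]
  | succ k hk ih =>
    have hm : ((k+1 ∈ (I ∩ Finset.Icc 1 (b-1)) ∪ (J ∩ Finset.Icc b m))) ↔ (k+1 ∈ J) := by
      rw [swap_mem hI hJ hb, if_neg (by omega)]
    rw [nc_step, nc_step, ih]
    simp only [hm]

/-- the summand of `wgt` -/
noncomputable def pwt (m : ℕ) (X : Finset ℕ) (q : ℕ × ℕ) : ℝ :=
  if (q.1 ∈ X ↔ q.2 ∈ X) then 0 else (1 / (m.choose 2 : ℝ)) ^ (q.2 - q.1)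

lemma wgt_eq (m : ℕ) (X : Finset ℕ) :
    wgt m X = ∑ q ∈ (Finset.Icc 1 m ×ˢ Finset.Icc 1 m).filter (fun q => q.1 < q.2),
      pwt m X q := rfl

lemma pwt_pair (m : ℕ) (X : Finset ℕ) (i j : ℕ) :
    pwt m X (i, j) = if (i ∈ X ↔ j ∈ X) then 0 else (1 / (m.choose 2 : ℝ)) ^ (j - i) := rfl

lemma pwt_nonneg {m : ℕ} (hm : 1 ≤ m.choose 2) (X : Finset ℕ) (q : ℕ × ℕ) :
    0 ≤ pwt m X q := by
  unfold pwt
  split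
  · exact le_refl 0
  · positivity

lemma pwt_le {m : ℕ} (X : Finset ℕ) (q : ℕ × ℕ) :
    pwt m X q ≤ (1 / (m.choose 2 : ℝ)) ^ (q.2 - q.1) := by
  unfold pwt
  split
  · positivity
  · exact le_refl _

lemma pwt_congr {m : ℕ} {X Y : Finset ℕ} {q : ℕ × ℕ}
    (h1 : q.1 ∈ X ↔ q.1 ∈ Y) (h2 : q.2 ∈ X ↔ q.2 ∈ Y) :
    pwt m X q = pwt m Y q := by
  unfold pwt
  have : (q.1 ∈ X ↔ q.2 ∈ X) ↔ (q.1 ∈ Y ↔ q.2 ∈ Y) := by tauto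
  simp only [this]

lemma card_pairs_le (m : ℕ) :
    ((Finset.Icc 1 m ×ˢ Finset.Icc 1 m).filter (fun q => q.1 < q.2)).card ≤ m.choose 2 := by
  have h := Finset.card_le_card_of_injOn
    (f := fun q : ℕ × ℕ => ({q.1, q.2} : Finset ℕ))
    (s := (Finset.Icc 1 m ×ˢ Finset.Icc 1 m).filter (fun q => q.1 < q.2))
    (t := (Finset.Icc 1 m).powersetCard 2)
    (by
      intro q hq
      simp only [Finset.mem_coe, Finset.mem_filter, Finset.mem_product] at hq ⊢
      rw [Finset.mem_powersetCard]
      constructor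
      · intro x hx
        simp only [Finset.mem_insert, Finset.mem_singleton] at hx
        rcases hx with h | h
        · exact h ▸ hq.1.1
        · exact h ▸ hq.1.2
      · exact Finset.card_pair (Nat.ne_of_lt hq.2))
    (by
      intro q hq r hr h
      simp only [Finset.mem_coe, Finset.mem_filter, Finset.mem_product] at hq hr
      have h' : ({q.1, q.2} : Finset ℕ) = {r.1, r.2} := h
      have h1 : q.1 = r.1 ∨ q.1 = r.2 := by
        have : q.1 ∈ ({r.1, r.2} : Finset ℕ) := by rw [← h']; simp
        simpa using this
      have h2 : q.2 = r.1 ∨ q.2 = r.2 := by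
        have : q.2 ∈ ({r.1, r.2} : Finset ℕ) := by
          rw [← h']; simp
        simpa using this
      have h3 : r.1 = q.1 ∨ r.1 = q.2 := by
        have : r.1 ∈ ({q.1, q.2} : Finset ℕ) := by rw [h']; simp
        simpa using this
      have hq2 := hq.2
      have hr2 := hr.2
      have : q.1 = r.1 ∧ q.2 = r.2 := by omega
      exact Prod.ext this.1 this.2)
  rwa [Finset.card_powersetCard, Nat.card_Icc, Nat.add_sub_cancel] at h

end Aux

/-- Resolving a kiss: if paths `p = p(I)` and `q = p(J)` come together at step `a`,
travel together through step `b-1`, and separate at step `b` without crossing, then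
swapping tails at step `b` produces paths `p'`, `q'` with `T_p + T_q = T_{p'} + T_{q'}`
and strictly smaller total weight `w(T_{p'}) + w(T_{q'}) < w(T_p) + w(T_q)`. -/
theorem kiss_swap (m a b : ℕ) (I J : Finset ℕ)
    (hI : I ⊆ Finset.Icc 1 m) (hJ : J ⊆ Finset.Icc 1 m)
    (ha : 1 ≤ a) (hab : a < b) (hbm : b ≤ m)
    (hmeet : northCount I a = northCount J a)
    (hsepa : ¬ ((a ∈ I) ↔ (a ∈ J)))
    (htog : ∀ i, a < i → i < b → ((i ∈ I) ↔ (i ∈ J)))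
    (hsepb : ¬ ((b ∈ I) ↔ (b ∈ J)))
    (hkiss : ¬ ((a ∈ I) ↔ (b ∈ I))) :
    (∀ x y : ℤ,
      Tpat I x y + Tpat J x y =
        Tpat ((I ∩ Finset.Icc 1 (b-1)) ∪ (J ∩ Finset.Icc b m)) x y +
        Tpat ((J ∩ Finset.Icc 1 (b-1)) ∪ (I ∩ Finset.Icc b m)) x y) ∧
    wgt m ((I ∩ Finset.Icc 1 (b-1)) ∪ (J ∩ Finset.Icc b m)) +
      wgt m ((J ∩ Finset.Icc 1 (b-1)) ∪ (I ∩ Finset.Icc b m)) < wgt m I + wgt m J := by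
  set I' := (I ∩ Finset.Icc 1 (b-1)) ∪ (J ∩ Finset.Icc b m) with hI'def
  set J' := (J ∩ Finset.Icc 1 (b-1)) ∪ (I ∩ Finset.Icc b m) with hJ'def
  have hb : 1 ≤ b := by omega
  have htogether : ∀ s, a ≤ s → s < b → northCount I s = northCount J s := by
    intro s hs
    induction s, hs using Nat.le_induction with
    | base => intro _; exact hmeet
    | succ s hs ih =>
      intro hsb
      rw [nc_step, nc_step, ih (by omega)]
      have h := htog (s+1) (by omega) hsb
      simp only [h]
  have hncb : northCount I (b-1) = northCount J (b-1) :=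
    htogether (b-1) (by omega) (by omega)
  have hI'lt : ∀ {k : ℕ}, k < b → northCount I' k = northCount I k :=
    fun hk => swap_nc_lt hI hJ hb hk
  have hJ'lt : ∀ {k : ℕ}, k < b → northCount J' k = northCount J k :=
    fun hk => swap_nc_lt hJ hI hb hk
  have hI'ge : ∀ k, b - 1 ≤ k → northCount I' k = northCount J k :=
    swap_nc_ge hI hJ hb hncb
  have hJ'ge : ∀ k, b - 1 ≤ k → northCount J' k = northCount I k :=
    swap_nc_ge hJ hI hb hncb.symm
  have memI' : ∀ i, i ∈ I' ↔ (if i < b then i ∈ I else i ∈ J) := swap_mem hI hJ hb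
  have memJ' : ∀ i, i ∈ J' ↔ (if i < b then i ∈ J else i ∈ I) := swap_mem hJ hI hb
  constructor
  · intro x y
    by_cases hk : (x+y+1).toNat < b
    · have e1 : Tpat I' x y = Tpat I x y := by
        unfold Tpat northCountZ; rw [hI'lt hk]
      have e2 : Tpat J' x y = Tpat J x y := by
        unfold Tpat northCountZ; rw [hJ'lt hk]
      rw [e1, e2]
    · have e1 : Tpat I' x y = Tpat J x y := by
        unfold Tpat northCountZ; rw [hI'ge _ (by omega)]
      have e2 : Tpat J' x y = Tpat I x y := by
        unfold Tpat northCountZ; rw [hJ'ge _ (by omega)]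
      rw [e1, e2]; ring
  · set S := (Finset.Icc 1 m ×ˢ Finset.Icc 1 m).filter (fun q => q.1 < q.2) with hS
    set ε : ℝ := 1 / (m.choose 2 : ℝ) with hε
    have hC : 1 ≤ m.choose 2 := Nat.choose_pos (by omega)
    have hCR : (1:ℝ) ≤ (m.choose 2 : ℝ) := by exact_mod_cast hC
    have hε0 : 0 < ε := by rw [hε]; positivity
    have hε1 : ε ≤ 1 := by rw [hε, div_le_one (by linarith)]; exact hCR
    have habS : (a, b) ∈ S := by
      simp only [hS, Finset.mem_filter, Finset.mem_product, Finset.mem_Icc]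
      omega
    have key : 0 < ∑ q ∈ S, (pwt m I q + pwt m J q - pwt m I' q - pwt m J' q) := by
      have e1 : pwt m I (a, b) = ε ^ (b - a) := by
        rw [pwt_pair, if_neg hkiss, hε]
      have e2 : pwt m J (a, b) = ε ^ (b - a) := by
        rw [pwt_pair, if_neg (by tauto), hε]
      have e3 : pwt m I' (a, b) = 0 := by
        have c1 : a ∈ I' ↔ a ∈ I := by rw [memI' a, if_pos hab]
        have c2 : b ∈ I' ↔ b ∈ J := by rw [memI' b, if_neg (lt_irrefl b)]
        rw [pwt_pair, if_pos (by rw [c1, c2]; tauto)]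
      have e4 : pwt m J' (a, b) = 0 := by
        have c1 : a ∈ J' ↔ a ∈ J := by rw [memJ' a, if_pos hab]
        have c2 : b ∈ J' ↔ b ∈ I := by rw [memJ' b, if_neg (lt_irrefl b)]
        rw [pwt_pair, if_pos (by rw [c1, c2]; tauto)]
      have hgab : pwt m I (a, b) + pwt m J (a, b) - pwt m I' (a, b) - pwt m J' (a, b)
          = 2 * ε ^ (b - a) := by rw [e1, e2, e3, e4]; ring
      have hpne : 0 ≤ ε ^ (b - a + 1) := pow_nonneg hε0.le _
      have hbound : ∀ q ∈ S.erase (a, b),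
          -(2 * ε ^ (b - a + 1)) ≤ pwt m I q + pwt m J q - pwt m I' q - pwt m J' q := by
        intro q hq
        have hqS := Finset.mem_of_mem_erase hq
        have hqne := Finset.ne_of_mem_erase hq
        simp only [hS, Finset.mem_filter, Finset.mem_product, Finset.mem_Icc] at hqS
        obtain ⟨⟨⟨hi1, hi2⟩, hj1, hj2⟩, hij⟩ := hqS
        rcases lt_or_ge q.2 b with hjb | hbj
        · have f1 : pwt m I' q = pwt m I q :=
            pwt_congr (by rw [memI' q.1, if_pos (by omega)]) (by rw [memI' q.2, if_pos hjb])
          have f2 : pwt m J' q = pwt m J q :=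
            pwt_congr (by rw [memJ' q.1, if_pos (by omega)]) (by rw [memJ' q.2, if_pos hjb])
          rw [f1, f2]; linarith
        rcases le_or_gt b q.1 with hbi | hib
        · have f1 : pwt m I' q = pwt m J q :=
            pwt_congr (by rw [memI' q.1, if_neg (by omega)]) (by rw [memI' q.2, if_neg (by omega)])
          have f2 : pwt m J' q = pwt m I q :=
            pwt_congr (by rw [memJ' q.1, if_neg (by omega)]) (by rw [memJ' q.2, if_neg (by omega)])
          rw [f1, f2]; linarith
        by_cases hiIJ : (q.1 ∈ I ↔ q.1 ∈ J)
        · have f1 : pwt m I' q = pwt m J q :=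
            pwt_congr (by rw [memI' q.1, if_pos hib]; exact hiIJ)
              (by rw [memI' q.2, if_neg (by omega)])
          have f2 : pwt m J' q = pwt m I q :=
            pwt_congr (by rw [memJ' q.1, if_pos hib]; exact hiIJ.symm)
              (by rw [memJ' q.2, if_neg (by omega)])
          rw [f1, f2]; linarith
        · have hia : q.1 ≤ a := by
            by_contra hcon
            push_neg at hcon
            exact hiIJ (htog q.1 hcon hib)
          have hne : q.1 ≠ a ∨ q.2 ≠ b := by
            by_contra hcon
            push_neg at hcon
            exact hqne (Prod.ext hcon.1 hcon.2)
          have hdiff : b - a + 1 ≤ q.2 - q.1 := by omega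
          have hb1 : pwt m I' q ≤ ε ^ (q.2 - q.1) := by rw [hε]; exact pwt_le I' q
          have hb2 : pwt m J' q ≤ ε ^ (q.2 - q.1) := by rw [hε]; exact pwt_le J' q
          have hmono : ε ^ (q.2 - q.1) ≤ ε ^ (b - a + 1) :=
            pow_le_pow_of_le_one hε0.le hε1 hdiff
          have n1 := pwt_nonneg hC I q
          have n2 := pwt_nonneg hC J q
          linarith
      have hsum := Finset.card_nsmul_le_sum (S.erase (a, b))
        (fun q => pwt m I q + pwt m J q - pwt m I' q - pwt m J' q)
        (-(2 * ε ^ (b - a + 1))) hbound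
      rw [nsmul_eq_mul] at hsum
      have hcard1 : (S.erase (a, b)).card ≤ m.choose 2 - 1 := by
        rw [Finset.card_erase_of_mem habS]
        exact Nat.sub_le_sub_right (card_pairs_le m) 1
      have hc : ((S.erase (a, b)).card : ℝ) ≤ (m.choose 2 : ℝ) - 1 := by
        have h1 : (((S.erase (a, b)).card : ℕ) : ℝ) ≤ ((m.choose 2 - 1 : ℕ) : ℝ) := by
          exact_mod_cast hcard1
        rwa [Nat.cast_sub hC, Nat.cast_one] at h1
      have hpos : 0 < ε ^ (b - a) := pow_pos hε0 _
      have hkey : ((m.choose 2 : ℝ) - 1) * ε < 1 := by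
        rw [hε, mul_one_div, div_lt_one (by linarith)]
        linarith
      rw [← Finset.add_sum_erase S _ habS, hgab]
      have h2 : ((S.erase (a, b)).card : ℝ) * (2 * ε ^ (b - a + 1))
          ≤ ((m.choose 2 : ℝ) - 1) * (2 * ε ^ (b - a + 1)) :=
        mul_le_mul_of_nonneg_right hc (by linarith)
      have h4 := mul_lt_mul_of_pos_left hkey (show (0:ℝ) < 2 * ε ^ (b - a) by linarith)
      have hpow : ε ^ (b - a + 1) = ε ^ (b - a) * ε := pow_succ ε (b - a)
      nlinarith [hsum, h2, h4, hpow]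
    rw [wgt_eq, wgt_eq, wgt_eq, wgt_eq]
    have expand : ∑ q ∈ S, (pwt m I q + pwt m J q - pwt m I' q - pwt m J' q)
        = (∑ q ∈ S, pwt m I q) + (∑ q ∈ S, pwt m J q)
          - (∑ q ∈ S, pwt m I' q) - (∑ q ∈ S, pwt m J' q) := by
      rw [Finset.sum_sub_distrib, Finset.sum_sub_distrib, Finset.sum_add_distrib]
    rw [expand] at key
    linarith
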